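/- arXiv:1010.0810 — 2 statements merged into one kernel-verified Lean document; each statement's English description precedes it below -/
import Mathlib

section
/- Let Θ ⊆ ℝ be open. Let p : Θ × ℝ → ℝ be strictly positive with ∫_ℝ p(θ,v) dv = 1 for every θ ∈ Θ, and let g : Θ × ℝ × ℝ → ℝ be strictly positive with ∫_ℝ g(θ,v,y) dy = 1 for every (θ,v), both partially differentiable in θ and in v, and assume all integrands appearing below are integrable. Suppose: (i) ∫_ℝ ∂g/∂θ(θ,v,y) dy = 0 and ∫_ℝ ∂g/∂v(θ,v,y) dy = 0 for every θ ∈ Θ and v ∈ ℝ (conditional first Bartlett identities), and (ii) ∫_ℝ ∂p/∂θ(θ,v) dv = 0 for every θ ∈ Θ. Define the h-loglikelihood h(θ,v;y) = log g(θ,v,y) + log p(θ,v) and let E_θ denote integration of functions of (y,v) against the joint density (y,v) ↦ g(θ,v,y)·p(θ,v) on ℝ². Then for every θ ∈ Θ one has E_θ[∂h/∂θ] = 0 and E_θ[∂h/∂v] = ∫_ℝ ∂p/∂v(θ,v) dv; consequently the first Bartlett identity for the h-likelihood, E_θ[∂h/∂θ] = 0 and E_θ[∂h/∂v] = 0 for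 all θ ∈ Θ, holds if and only if ∫_ℝ ∂p/∂v(θ,v) dv = 0 for all θ ∈ Θ. -/
open MeasureTheory Real

/-- First Bartlett identity for the h-likelihood (paper's Theorem 1, first part).

`Θ ⊆ ℝ` is open; `p θ v` is the marginal density of the unobservable `v` and
`g θ v y` the conditional density of the observable `y` given `v`. The h-loglikelihood
is `h(θ,v;y) = log (g θ v y) + log (p θ v)`, and `E_θ` integrates functions of
`z = (y, v)` against the joint density `g θ v y * p θ v` on `ℝ²`. Assuming the
conditional first Bartlett identities for `g` in both `θ` and `v`, and the first
Bartlett identity for `p` in `θ`, one always has `E_θ[∂h/∂θ] = 0` and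
`E_θ[∂h/∂v] = ∫ ∂p/∂v dv`; hence the first Bartlett identity for the h-likelihood
holds iff `∫ ∂p/∂v (θ,v) dv = 0` for all `θ ∈ Θ`. -/
theorem stmt_0
    (Θ : Set ℝ) (hΘ : IsOpen Θ)
    (p : ℝ → ℝ → ℝ) (g : ℝ → ℝ → ℝ → ℝ)
    (hp_pos : ∀ θ ∈ Θ, ∀ v : ℝ, 0 < p θ v)
    (hp_one : ∀ θ ∈ Θ, (∫ v : ℝ, p θ v) = 1)
    (hg_pos : ∀ θ ∈ Θ, ∀ v y : ℝ, 0 < g θ v y)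
    (hg_one : ∀ θ ∈ Θ, ∀ v : ℝ, (∫ y : ℝ, g θ v y) = 1)
    (hp_diffθ : ∀ θ ∈ Θ, ∀ v : ℝ, DifferentiableAt ℝ (fun t => p t v) θ)
    (hp_diffv : ∀ θ ∈ Θ, ∀ v : ℝ, DifferentiableAt ℝ (fun w => p θ w) v)
    (hg_diffθ : ∀ θ ∈ Θ, ∀ v y : ℝ, DifferentiableAt ℝ (fun t => g t v y) θ)
    (hg_diffv : ∀ θ ∈ Θ, ∀ v y : ℝ, DifferentiableAt ℝ (fun w => g θ w y) v)
    -- integrability of all integrands appearing below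
    (hint_gθ : ∀ θ ∈ Θ, ∀ v : ℝ, Integrable (fun y : ℝ => deriv (fun t => g t v y) θ))
    (hint_gv : ∀ θ ∈ Θ, ∀ v : ℝ, Integrable (fun y : ℝ => deriv (fun w => g θ w y) v))
    (hint_pθ : ∀ θ ∈ Θ, Integrable (fun v : ℝ => deriv (fun t => p t v) θ))
    (hint_pv : ∀ θ ∈ Θ, Integrable (fun v : ℝ => deriv (fun w => p θ w) v))
    (hint_hθ : ∀ θ ∈ Θ, Integrable (fun z : ℝ × ℝ =>
      deriv (fun t => Real.log (g t z.2 z.1) + Real.log (p t z.2)) θ * (g θ z.2 z.1 * p θ z.2)))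
    (hint_hv : ∀ θ ∈ Θ, Integrable (fun z : ℝ × ℝ =>
      deriv (fun w => Real.log (g θ w z.1) + Real.log (p θ w)) z.2 * (g θ z.2 z.1 * p θ z.2)))
    -- (i) conditional first Bartlett identities for g
    (hBg_θ : ∀ θ ∈ Θ, ∀ v : ℝ, (∫ y : ℝ, deriv (fun t => g t v y) θ) = 0)
    (hBg_v : ∀ θ ∈ Θ, ∀ v : ℝ, (∫ y : ℝ, deriv (fun w => g θ w y) v) = 0)
    -- (ii) first Bartlett identity for p in θ
    (hBp_θ : ∀ θ ∈ Θ, (∫ v : ℝ, deriv (fun t => p t v) θ) = 0) :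
    (∀ θ ∈ Θ,
      (∫ z : ℝ × ℝ,
        deriv (fun t => Real.log (g t z.2 z.1) + Real.log (p t z.2)) θ *
          (g θ z.2 z.1 * p θ z.2)) = 0 ∧
      (∫ z : ℝ × ℝ,
        deriv (fun w => Real.log (g θ w z.1) + Real.log (p θ w)) z.2 *
          (g θ z.2 z.1 * p θ z.2)) = ∫ v : ℝ, deriv (fun w => p θ w) v) ∧
    ((∀ θ ∈ Θ,
      (∫ z : ℝ × ℝ,
        deriv (fun t => Real.log (g t z.2 z.1) + Real.log (p t z.2)) θ *
          (g θ z.2 z.1 * p θ z.2)) = 0 ∧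
      (∫ z : ℝ × ℝ,
        deriv (fun w => Real.log (g θ w z.1) + Real.log (p θ w)) z.2 *
          (g θ z.2 z.1 * p θ z.2)) = 0) ↔
      (∀ θ ∈ Θ, (∫ v : ℝ, deriv (fun w => p θ w) v) = 0)) := by

  have key : ∀ θ ∈ Θ,
      (∫ z : ℝ × ℝ,
        deriv (fun t => Real.log (g t z.2 z.1) + Real.log (p t z.2)) θ *
          (g θ z.2 z.1 * p θ z.2)) = 0 ∧
      (∫ z : ℝ × ℝ,
        deriv (fun w => Real.log (g θ w z.1) + Real.log (p θ w)) z.2 *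
          (g θ z.2 z.1 * p θ z.2)) = ∫ v : ℝ, deriv (fun w => p θ w) v := by
    intro θ hθ
    have hgne : ∀ v y : ℝ, g θ v y ≠ 0 := fun v y => (hg_pos θ hθ v y).ne'
    have hpne : ∀ v : ℝ, p θ v ≠ 0 := fun v => (hp_pos θ hθ v).ne'
    have hg_int : ∀ v : ℝ, Integrable (fun y => g θ v y) := by
      intro v
      by_contra h
      have := hg_one θ hθ v
      rw [integral_undef h] at this
      norm_num at this
    -- pointwise derivative in θ
    have hdθ : ∀ v y : ℝ,
        deriv (fun t => Real.log (g t v y) + Real.log (p t v)) θ =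
          deriv (fun t => g t v y) θ / g θ v y + deriv (fun t => p t v) θ / p θ v := by
      intro v y
      have h1 : HasDerivAt (fun t => Real.log (g t v y))
          (deriv (fun t => g t v y) θ / g θ v y) θ :=
        (hg_diffθ θ hθ v y).hasDerivAt.log (hgne v y)
      have h2 : HasDerivAt (fun t => Real.log (p t v))
          (deriv (fun t => p t v) θ / p θ v) θ :=
        (hp_diffθ θ hθ v).hasDerivAt.log (hpne v)
      exact (h1.add h2).deriv
    have hdv : ∀ v y : ℝ,
        deriv (fun w => Real.log (g θ w y) + Real.log (p θ w)) v =
          deriv (fun w => g θ w y) v / g θ v y + deriv (fun w => p θ w) v / p θ v := by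
      intro v y
      have h1 : HasDerivAt (fun w => Real.log (g θ w y))
          (deriv (fun w => g θ w y) v / g θ v y) v :=
        (hg_diffv θ hθ v y).hasDerivAt.log (hgne v y)
      have h2 : HasDerivAt (fun w => Real.log (p θ w))
          (deriv (fun w => p θ w) v / p θ v) v :=
        (hp_diffv θ hθ v).hasDerivAt.log (hpne v)
      exact (h1.add h2).deriv
    have hFeqθ : (fun z : ℝ × ℝ =>
        deriv (fun t => Real.log (g t z.2 z.1) + Real.log (p t z.2)) θ *
          (g θ z.2 z.1 * p θ z.2)) =
        fun z : ℝ × ℝ =>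
          deriv (fun t => g t z.2 z.1) θ * p θ z.2 +
            deriv (fun t => p t z.2) θ * g θ z.2 z.1 := by
      funext z
      rw [hdθ z.2 z.1]
      field_simp [hgne z.2 z.1, hpne z.2]
    have hFeqv : (fun z : ℝ × ℝ =>
        deriv (fun w => Real.log (g θ w z.1) + Real.log (p θ w)) z.2 *
          (g θ z.2 z.1 * p θ z.2)) =
        fun z : ℝ × ℝ =>
          deriv (fun w => g θ w z.1) z.2 * p θ z.2 +
            deriv (fun w => p θ w) z.2 * g θ z.2 z.1 := by
      funext z
      rw [hdv z.2 z.1]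
      field_simp [hgne z.2 z.1, hpne z.2]
    have hinner_θ : ∀ v : ℝ,
        (∫ y : ℝ, (deriv (fun t => g t v y) θ * p θ v +
            deriv (fun t => p t v) θ * g θ v y)) = deriv (fun t => p t v) θ := by
      intro v
      rw [integral_add ((hint_gθ θ hθ v).mul_const _) ((hg_int v).const_mul _),
        integral_mul_const _, integral_const_mul _, hBg_θ θ hθ v, hg_one θ hθ v]
      ring
    have hinner_v : ∀ v : ℝ,
        (∫ y : ℝ, (deriv (fun w => g θ w y) v * p θ v +
            deriv (fun w => p θ w) v * g θ v y)) = deriv (fun w => p θ w) v := by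
      intro v
      rw [integral_add ((hint_gv θ hθ v).mul_const _) ((hg_int v).const_mul _),
        integral_mul_const _, integral_const_mul _, hBg_v θ hθ v, hg_one θ hθ v]
      ring
    constructor
    · have hF : Integrable (fun z : ℝ × ℝ =>
          deriv (fun t => g t z.2 z.1) θ * p θ z.2 +
            deriv (fun t => p t z.2) θ * g θ z.2 z.1) := by
        rw [← hFeqθ]; exact hint_hθ θ hθ
      rw [hFeqθ]
      rw [Measure.volume_eq_prod] at hF ⊢
      rw [MeasureTheory.integral_prod_symm _ hF]
      simp only [hinner_θ]
      exact hBp_θ θ hθ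
    · have hF : Integrable (fun z : ℝ × ℝ =>
          deriv (fun w => g θ w z.1) z.2 * p θ z.2 +
            deriv (fun w => p θ w) z.2 * g θ z.2 z.1) := by
        rw [← hFeqv]; exact hint_hv θ hθ
      rw [hFeqv]
      rw [Measure.volume_eq_prod] at hF ⊢
      rw [MeasureTheory.integral_prod_symm _ hF]
      simp only [hinner_v]
  refine ⟨key, ?_⟩
  constructor
  · intro H θ hθ
    exact ((key θ hθ).2).symm.trans (H θ hθ).2
  · intro H θ hθ
    exact ⟨(key θ hθ).1, (key θ hθ).2.trans (H θ hθ)⟩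
end

section
/- Let n ≥ 1 be an integer, θ > 0, and α ∈ (0,1), and set c(α,n) = n(α^{−1/n} − 1). If y_1, …, y_n, y_{n+1} are i.i.d. exponential random variables with rate θ and ȳ_n = (y_1 + ⋯ + y_n)/n, then P(y_{n+1} ≤ c(α,n)·ȳ_n) = 1 − α. That is, the interval [0, c(α,n)·ȳ_n] covers the future observation y_{n+1} with probability exactly 1 − α, for every θ. -/
open MeasureTheory ProbabilityTheory Real Set

lemma expMeasure_eq_withDensity (r : ℝ) :
    expMeasure r = volume.withDensity (exponentialPDF r) := rfl

lemma aux_laplace {θ t : ℝ} (hθ : 0 < θ) (ht : t < θ) :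
    ∫⁻ x, ENNReal.ofReal (rexp (t * x)) ∂(expMeasure θ) = ENNReal.ofReal (θ / (θ - t)) := by
  have hpos : 0 < θ - t := by linarith
  have hne : θ - t ≠ 0 := hpos.ne'
  have hmg : Measurable fun x : ℝ => ENNReal.ofReal (rexp (t * x)) :=
    (measurable_id.const_mul t).exp.ennreal_ofReal
  have hmp : Measurable (exponentialPDF θ) :=
    (measurable_exponentialPDFReal θ).ennreal_ofReal
  rw [expMeasure_eq_withDensity, lintegral_withDensity_eq_lintegral_mul _ hmp hmg]
  have hpt : ∀ x : ℝ, exponentialPDF θ x * ENNReal.ofReal (rexp (t * x))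
      = ENNReal.ofReal (θ / (θ - t)) * exponentialPDF (θ - t) x := by
    intro x
    rcases lt_or_ge x 0 with hx | hx
    · simp [exponentialPDF_of_neg hx]
    · rw [exponentialPDF_of_nonneg hx, exponentialPDF_of_nonneg hx,
        ← ENNReal.ofReal_mul (by positivity), ← ENNReal.ofReal_mul (by positivity)]
      congr 1
      rw [mul_assoc, ← Real.exp_add, ← mul_assoc, div_mul_cancel₀ _ hne,
        show -(θ * x) + t * x = -((θ - t) * x) by ring]
    
  calc ∫⁻ x, (exponentialPDF θ * fun x => ENNReal.ofReal (rexp (t * x))) x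
      = ∫⁻ x, ENNReal.ofReal (θ / (θ - t)) * exponentialPDF (θ - t) x := by
        simp only [Pi.mul_apply]; exact lintegral_congr hpt
    _ = ENNReal.ofReal (θ / (θ - t)) * ∫⁻ x, exponentialPDF (θ - t) x :=
        lintegral_const_mul _ ((measurable_exponentialPDFReal _).ennreal_ofReal)
    _ = ENNReal.ofReal (θ / (θ - t)) := by rw [lintegral_exponentialPDF_eq_one hpos, mul_one]

lemma expMeasure_Iic {θ : ℝ} (hθ : 0 < θ) (x : ℝ) :
    expMeasure θ (Iic x) = ENNReal.ofReal (if 0 ≤ x then 1 - rexp (-(θ * x)) else 0) := by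
  rw [expMeasure_eq_withDensity, withDensity_apply _ measurableSet_Iic,
    lintegral_exponentialPDF_eq_antiDeriv hθ]

lemma expMeasure_Iio_zero {θ : ℝ} : expMeasure θ (Iio 0) = 0 := by
  rw [expMeasure_eq_withDensity, withDensity_apply _ measurableSet_Iio,
    lintegral_exponentialPDF_of_nonpos le_rfl]

lemma aux_mgf {Ω : Type*} [MeasurableSpace Ω] (P : Measure Ω) [IsProbabilityMeasure P]
    {θ t : ℝ} (hθ : 0 < θ) (ht : t < θ) {X : Ω → ℝ} (hX : Measurable X)
    (hlaw : Measure.map X P = expMeasure θ) : mgf X P t = θ / (θ - t) := by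
  have hmg : Measurable fun x : ℝ => ENNReal.ofReal (rexp (t * x)) :=
    (measurable_id.const_mul t).exp.ennreal_ofReal
  have h1 : ∫⁻ ω, ENNReal.ofReal (rexp (t * X ω)) ∂P = ENNReal.ofReal (θ / (θ - t)) := by
    rw [← lintegral_map hmg hX, hlaw, aux_laplace hθ ht]
  rw [mgf, integral_eq_lintegral_of_nonneg_ae (ae_of_all _ fun ω => (exp_pos _).le)
    ((hX.const_mul t).exp.aestronglyMeasurable), h1, ENNReal.toReal_ofReal (le_of_lt (div_pos hθ (by linarith)))]

/-- Exact frequentist coverage of the highest density predictive interval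
(paper's equation (40)).

If `y₀, …, yₙ` are i.i.d. exponential with rate `θ` and `ȳₙ` is the mean of the first
`n` of them, then with `c(α,n) = n (α^{-1/n} - 1)` the interval `[0, c(α,n) ȳₙ]`
covers the future observation `yₙ` with probability exactly `1 - α`, for every `θ`. -/
theorem stmt_17 {Ω : Type*} [MeasurableSpace Ω] (P : Measure Ω) [IsProbabilityMeasure P]
    (n : ℕ) (hn : 1 ≤ n) (θ : ℝ) (hθ : 0 < θ) (α : ℝ) (hα0 : 0 < α) (hα1 : α < 1)
    (y : Fin (n + 1) → Ω → ℝ) (hmeas : ∀ i, Measurable (y i))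
    (hiid : iIndepFun y P)
    (hlaw : ∀ i, Measure.map (y i) P = expMeasure θ) :
    P {ω | y (Fin.last n) ω ≤
        (n : ℝ) * (α ^ (-(1 : ℝ) / (n : ℝ)) - 1) *
          ((∑ i : Fin n, y (Fin.castSucc i) ω) / (n : ℝ))} =
      ENNReal.ofReal (1 - α) := by
  classical
  have hn0 : (0 : ℝ) < (n : ℝ) := by exact_mod_cast hn
  set a : ℝ := α ^ (-(1 : ℝ) / (n : ℝ)) with ha_def
  have ha1 : 1 < a := by
    rw [ha_def]
    rw [Real.one_lt_rpow_iff_of_pos hα0]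
    right
    constructor
    · exact hα1
    · exact div_neg_of_neg_of_pos (by norm_num) hn0
  set c : ℝ := a - 1 with hc_def
  have hc0 : 0 < c := by simp [hc_def]; linarith
  set t : ℝ := -(θ * c) with ht_def
  have ht : t < θ := by
    have : 0 < θ * c := mul_pos hθ hc0
    rw [ht_def]; linarith
  have hθt : θ - t = θ * a := by rw [ht_def, hc_def]; ring
  -- the sum S
  set s : Finset (Fin (n + 1)) := Finset.univ.erase (Fin.last n) with hs_def
  have hlast : Fin.last n ∉ s := Finset.notMem_erase _ _
  set S : Ω → ℝ := fun ω => ∑ j ∈ s, y j ω with hS_def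
  have hS : Measurable S := Finset.measurable_sum s fun i _ => hmeas i
  have hsum_eq : (∑ j ∈ s, y j) = S := by
    funext ω; rw [hS_def]; simp [Finset.sum_apply]
  have hTS : ∀ ω, ∑ i : Fin n, y (Fin.castSucc i) ω = S ω := by
    intro ω
    have h1 := Fin.sum_univ_castSucc (f := fun i => y i ω)
    have h2 := Finset.sum_erase_add Finset.univ (fun j => y j ω) (Finset.mem_univ (Fin.last n))
    rw [hS_def]
    simp only at h1 h2 ⊢
    linarith
  -- rewrite the event
  have hsetev : {ω | y (Fin.last n) ω ≤
      (n : ℝ) * (α ^ (-(1 : ℝ) / (n : ℝ)) - 1) *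
        ((∑ i : Fin n, y (Fin.castSucc i) ω) / (n : ℝ))}
      = (fun ω => (S ω, y (Fin.last n) ω)) ⁻¹' {p : ℝ × ℝ | p.2 ≤ c * p.1} := by
    ext ω
    simp only [Set.mem_setOf_eq, Set.mem_preimage, hTS ω]
    rw [← ha_def, ← hc_def]
    constructor <;> intro h
    · calc y (Fin.last n) ω ≤ (n : ℝ) * c * (S ω / (n : ℝ)) := h
        _ = c * S ω := by field_simp
    · calc y (Fin.last n) ω ≤ c * S ω := h
        _ = (n : ℝ) * c * (S ω / (n : ℝ)) := by field_simp
  -- independence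
  have hSY : IndepFun S (y (Fin.last n)) P := by
    have h := hiid.indepFun_finsetSum_of_notMem hmeas hlast
    rwa [hsum_eq] at h
  have hpair : P.map (fun ω => (S ω, y (Fin.last n) ω))
      = (P.map S).prod (P.map (y (Fin.last n))) :=
    (indepFun_iff_map_prod_eq_prod_map_map hS.aemeasurable
      (hmeas _).aemeasurable).mp hSY
  haveI : IsProbabilityMeasure (expMeasure θ) := isProbabilityMeasure_expMeasure hθ
  haveI : IsProbabilityMeasure (P.map S) := Measure.isProbabilityMeasure_map hS.aemeasurable
  have hmset : MeasurableSet {p : ℝ × ℝ | p.2 ≤ c * p.1} :=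
    measurableSet_le measurable_snd (measurable_fst.const_mul c)
  -- a.e. nonnegativity
  have hnn : ∀ i, ∀ᵐ ω ∂P, 0 ≤ y i ω := by
    intro i
    have h0 : P (y i ⁻¹' Iio 0) = 0 := by
      rw [← Measure.map_apply (hmeas i) measurableSet_Iio, hlaw i, expMeasure_Iio_zero]
    rw [ae_iff]
    convert h0 using 2
    ext ω; simp
  have hSnn : ∀ᵐ ω ∂P, 0 ≤ S ω := by
    filter_upwards [ae_all_iff.2 hnn] with ω hω
    exact Finset.sum_nonneg fun j _ => hω j
  have hSnn' : ∀ᵐ x ∂(P.map S), 0 ≤ x :=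
    (ae_map_iff hS.aemeasurable measurableSet_Ici).mpr hSnn
  -- the mgf computation
  have hcard : s.card = n := by
    rw [hs_def, Finset.card_erase_of_mem (Finset.mem_univ _)]
    simp
  have hmgfS : mgf S P t = (θ / (θ - t)) ^ n := by
    rw [← hsum_eq, hiid.mgf_sum hmeas s]
    rw [Finset.prod_congr rfl fun j _ => aux_mgf P hθ ht (hmeas j) (hlaw j),
      Finset.prod_const, hcard]
  have hmg : Measurable fun x : ℝ => ENNReal.ofReal (rexp (t * x)) :=
    (measurable_id.const_mul t).exp.ennreal_ofReal
  -- integrability of exp (t * S)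
  have hint : Integrable (fun ω => rexp (t * S ω)) P := by
    refine Integrable.mono' (integrable_const 1)
      ((hS.const_mul t).exp.aestronglyMeasurable) ?_
    filter_upwards [hSnn] with ω hω
    rw [Real.norm_eq_abs, abs_of_pos (exp_pos _)]
    exact Real.exp_le_one_iff.mpr (mul_nonpos_of_nonpos_of_nonneg (by rw [ht_def]; nlinarith) hω)
  have hlint : ∫⁻ x, ENNReal.ofReal (rexp (t * x)) ∂(P.map S)
      = ENNReal.ofReal ((θ / (θ - t)) ^ n) := by
    rw [lintegral_map hmg hS,
      ← ofReal_integral_eq_lintegral_ofReal hint (ae_of_all _ fun ω => (exp_pos _).le)]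
    rw [← hmgfS]; rfl
  -- main computation
  rw [hsetev, ← Measure.map_apply (hS.prodMk (hmeas _)) hmset, hpair, hlaw,
    Measure.prod_apply hmset]
  have hpre : ∀ x : ℝ, (Prod.mk x ⁻¹' {p : ℝ × ℝ | p.2 ≤ c * p.1}) = Iic (c * x) := by
    intro x; ext z; simp [Set.mem_Iic]
  have hcongr : ∫⁻ x, expMeasure θ (Prod.mk x ⁻¹' {p : ℝ × ℝ | p.2 ≤ c * p.1}) ∂(P.map S)
      = ∫⁻ x, (1 - ENNReal.ofReal (rexp (t * x))) ∂(P.map S) := by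
    refine lintegral_congr_ae ?_
    filter_upwards [hSnn'] with x hx
    rw [hpre x, expMeasure_Iic hθ, if_pos (by positivity)]
    rw [show -(θ * (c * x)) = t * x by rw [ht_def]; ring,
      ENNReal.ofReal_sub _ (exp_pos _).le, ENNReal.ofReal_one]
  rw [hcongr, lintegral_sub hmg
      (by rw [hlint]; exact ENNReal.ofReal_ne_top)
      (by filter_upwards [hSnn'] with x hx
          simpa using ENNReal.ofReal_le_one.mpr (Real.exp_le_one_iff.mpr
            (mul_nonpos_of_nonpos_of_nonneg (by rw [ht_def]; nlinarith) hx))),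
    hlint, lintegral_one, measure_univ]
  -- final arithmetic
  have hfin : (θ / (θ - t)) ^ n = α := by
    have : θ / (θ - t) = a⁻¹ := by rw [hθt]; field_simp
    rw [this, ha_def, ← Real.rpow_neg_one, ← Real.rpow_natCast _ n,
      ← Real.rpow_mul hα0.le, ← Real.rpow_mul hα0.le,
      show -(1:ℝ)/(n:ℝ) * -1 * (n:ℝ) = 1 by field_simp, Real.rpow_one]
  rw [hfin, ENNReal.ofReal_sub _ hα0.le, ENNReal.ofReal_one]
end
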